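/- Let (T₁,T₂) be a random vector taking values in {1,2,3,...} × {1,2,3,...}, and set T* = min(T₁,T₂) and ε = 1 meaning T₁ > T₂. Fix integers i ≥ 1 and d ≥ 1, and assume P{T* ≥ j} > 0 for all 1 ≤ j ≤ i, P{ε = 1, T* = i} > 0, and P{T₁ ≥ i + d', T* = i, ε = 1} > 0 for all 1 ≤ d' ≤ d. Then P{T₁ = i + d, T₂ = i} = (∏_{j=1}^{i-1} P{T* > j}/P{T* ≥ j}) · (P{T* = i}/P{T* ≥ i}) · P{ε = 1 | T* = i} · (∏_{d'=1}^{d-1} P{T₁ > i + d' | T* = i, ε = 1} / P{T₁ ≥ i + d' | T* = i, ε = 1}) · (P{T₁ = i + d | T* = i, ε = 1} / P{T₁ ≥ i + d | T* = i, ε = 1}). -/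

import Mathlib

open MeasureTheory

private lemma div_mul_div_chain (x y z : ENNReal) (h0 : y ≠ 0) (ht : y ≠ ⊤) :
    x / y * (y / z) = x / z := by
  rw [div_eq_mul_inv, div_eq_mul_inv, div_eq_mul_inv, mul_assoc, ← mul_assoc y⁻¹,
    ENNReal.inv_mul_cancel h0 ht, one_mul]

private lemma mul_div_self_chain (a b : ENNReal) (h0 : a ≠ 0) (ht : a ≠ ⊤) :
    a * (b / a) = b := by
  rw [← mul_div_assoc, mul_comm, mul_div_assoc, ENNReal.div_self h0 ht, mul_one]

private lemma tele_prod (f : ℕ → ENNReal) (a b : ℕ) (hab : a ≤ b)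
    (h0 : ∀ j, a ≤ j → j ≤ b → f j ≠ 0) (ht : ∀ j, a ≤ j → j ≤ b → f j ≠ ⊤) :
    ∏ j ∈ Finset.Ico a b, f (j + 1) / f j = f b / f a := by
  induction b, hab using Nat.le_induction with
  | base => simp [ENNReal.div_self (h0 a le_rfl le_rfl) (ht a le_rfl le_rfl)]
  | succ n hn ih =>
    rw [Finset.prod_Ico_succ_top hn,
      ih (fun j hj hjb => h0 j hj (hjb.trans (Nat.le_succ n)))
        (fun j hj hjb => ht j hj (hjb.trans (Nat.le_succ n))),
      mul_comm, div_mul_div_chain _ _ _ (h0 n hn (Nat.le_succ n)) (ht n hn (Nat.le_succ n))]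

/-- Equation (1) of Section 4: for a time-discrete bivariate survival
distribution on `{1,2,...}²`, with `T* = min T₁ T₂` and `ε = 1` meaning
`T₁ > T₂`, and integers `i, d ≥ 1`, under the stated positivity conditions,
`P{T₁ = i+d, T₂ = i}` factors as
`(∏_{j=1}^{i-1} P{T* > j}/P{T* ≥ j}) ⬝ (P{T* = i}/P{T* ≥ i})
  ⬝ P{ε = 1 | T* = i}
  ⬝ (∏_{d'=1}^{d-1} P{T₁ > i+d' | T* = i, ε = 1}/P{T₁ ≥ i+d' | T* = i, ε = 1})
  ⬝ (P{T₁ = i+d | T* = i, ε = 1}/P{T₁ ≥ i+d | T* = i, ε = 1})`,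
where the conditional probabilities are written as ratios. -/
theorem stmt12 {Ω : Type*} [MeasurableSpace Ω] (μ : Measure Ω) [IsProbabilityMeasure μ]
    (T₁ T₂ : Ω → ℕ) (hT₁1 : ∀ ω, 1 ≤ T₁ ω) (hT₂1 : ∀ ω, 1 ≤ T₂ ω)
    (i d : ℕ) (hi : 1 ≤ i) (hd : 1 ≤ d)
    (hstar : ∀ j, 1 ≤ j → j ≤ i → 0 < μ {ω | j ≤ min (T₁ ω) (T₂ ω)})
    (heps : 0 < μ {ω | T₂ ω < T₁ ω ∧ min (T₁ ω) (T₂ ω) = i})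
    (hcond : ∀ d', 1 ≤ d' → d' ≤ d →
      0 < μ {ω | i + d' ≤ T₁ ω ∧ min (T₁ ω) (T₂ ω) = i ∧ T₂ ω < T₁ ω}) :
    μ {ω | T₁ ω = i + d ∧ T₂ ω = i}
      = (∏ j ∈ Finset.Icc 1 (i - 1),
            μ {ω | j < min (T₁ ω) (T₂ ω)} / μ {ω | j ≤ min (T₁ ω) (T₂ ω)})
        * (μ {ω | min (T₁ ω) (T₂ ω) = i} / μ {ω | i ≤ min (T₁ ω) (T₂ ω)})
        * (μ {ω | T₂ ω < T₁ ω ∧ min (T₁ ω) (T₂ ω) = i} /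
            μ {ω | min (T₁ ω) (T₂ ω) = i})
        * (∏ d' ∈ Finset.Icc 1 (d - 1),
            μ {ω | i + d' < T₁ ω ∧ min (T₁ ω) (T₂ ω) = i ∧ T₂ ω < T₁ ω} /
              μ {ω | i + d' ≤ T₁ ω ∧ min (T₁ ω) (T₂ ω) = i ∧ T₂ ω < T₁ ω})
        * (μ {ω | T₁ ω = i + d ∧ min (T₁ ω) (T₂ ω) = i ∧ T₂ ω < T₁ ω} /
            μ {ω | i + d ≤ T₁ ω ∧ min (T₁ ω) (T₂ ω) = i ∧ T₂ ω < T₁ ω}) := by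
  set f : ℕ → ENNReal := fun j => μ {ω | j ≤ min (T₁ ω) (T₂ ω)} with hf
  set g : ℕ → ENNReal := fun k => μ {ω | i + k ≤ T₁ ω ∧ min (T₁ ω) (T₂ ω) = i ∧ T₂ ω < T₁ ω}
    with hg
  -- basic positivity / finiteness facts
  have hf0 : ∀ j, 1 ≤ j → j ≤ i → f j ≠ 0 := fun j h1 h2 => (hstar j h1 h2).ne'
  have hft : ∀ j, f j ≠ ⊤ := fun j => measure_ne_top μ _
  have hg0 : ∀ k, 1 ≤ k → k ≤ d → g k ≠ 0 := fun k h1 h2 => (hcond k h1 h2).ne'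
  have hgt : ∀ k, g k ≠ ⊤ := fun k => measure_ne_top μ _
  have hf1 : f 1 = 1 := by
    have : {ω | 1 ≤ min (T₁ ω) (T₂ ω)} = Set.univ := by
      ext ω; simp only [Set.mem_setOf_eq, Set.mem_univ, iff_true]
      exact le_min (hT₁1 ω) (hT₂1 ω)
    rw [hf]; simp only [this, measure_univ]
  -- the first product telescopes
  have hIcc : Finset.Icc 1 (i - 1) = Finset.Ico 1 i := by
    ext x; simp only [Finset.mem_Icc, Finset.mem_Ico]; omega
  have hlt : ∀ j : ℕ, {ω | j < min (T₁ ω) (T₂ ω)} = {ω | j + 1 ≤ min (T₁ ω) (T₂ ω)} := by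
    intro j; ext ω; simp [Nat.add_one_le_iff]
  have hprod1 : (∏ j ∈ Finset.Icc 1 (i - 1),
      μ {ω | j < min (T₁ ω) (T₂ ω)} / μ {ω | j ≤ min (T₁ ω) (T₂ ω)}) = f i / f 1 := by
    rw [hIcc]
    have : ∀ j ∈ Finset.Ico 1 i,
        μ {ω | j < min (T₁ ω) (T₂ ω)} / μ {ω | j ≤ min (T₁ ω) (T₂ ω)} = f (j + 1) / f j := by
      intro j _; rw [hlt j]
    rw [Finset.prod_congr rfl this]
    exact tele_prod f 1 i hi (fun j h1 h2 => hf0 j h1 h2) (fun j _ _ => hft j)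
  -- the second product telescopes
  have hIcc2 : Finset.Icc 1 (d - 1) = Finset.Ico 1 d := by
    ext x; simp only [Finset.mem_Icc, Finset.mem_Ico]; omega
  have hltg : ∀ k : ℕ, {ω | i + k < T₁ ω ∧ min (T₁ ω) (T₂ ω) = i ∧ T₂ ω < T₁ ω}
      = {ω | i + (k + 1) ≤ T₁ ω ∧ min (T₁ ω) (T₂ ω) = i ∧ T₂ ω < T₁ ω} := by
    intro k; ext ω
    simp only [Set.mem_setOf_eq, ← add_assoc, Nat.add_one_le_iff]
  have hprod2 : (∏ d' ∈ Finset.Icc 1 (d - 1),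
      μ {ω | i + d' < T₁ ω ∧ min (T₁ ω) (T₂ ω) = i ∧ T₂ ω < T₁ ω} /
        μ {ω | i + d' ≤ T₁ ω ∧ min (T₁ ω) (T₂ ω) = i ∧ T₂ ω < T₁ ω}) = g d / g 1 := by
    rw [hIcc2]
    have : ∀ k ∈ Finset.Ico 1 d,
        μ {ω | i + k < T₁ ω ∧ min (T₁ ω) (T₂ ω) = i ∧ T₂ ω < T₁ ω} /
          μ {ω | i + k ≤ T₁ ω ∧ min (T₁ ω) (T₂ ω) = i ∧ T₂ ω < T₁ ω} = g (k + 1) / g k := by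
      intro k _; rw [hltg k]
    rw [Finset.prod_congr rfl this]
    exact tele_prod g 1 d hd (fun k h1 h2 => hg0 k h1 h2) (fun k _ _ => hgt k)
  -- g 1 is the "ε = 1, T* = i" event
  have hg1 : μ {ω | T₂ ω < T₁ ω ∧ min (T₁ ω) (T₂ ω) = i} = g 1 := by
    have : {ω | T₂ ω < T₁ ω ∧ min (T₁ ω) (T₂ ω) = i}
        = {ω | i + 1 ≤ T₁ ω ∧ min (T₁ ω) (T₂ ω) = i ∧ T₂ ω < T₁ ω} := by
      ext ω
      simp only [Set.mem_setOf_eq]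
      constructor
      · rintro ⟨hlt', hmin⟩
        have hT2 : T₂ ω = i := by
          rw [← hmin, min_eq_right hlt'.le]
        refine ⟨?_, hmin, hlt'⟩
        omega
      · rintro ⟨_, hmin, hlt'⟩; exact ⟨hlt', hmin⟩
    rw [this]
  -- B := μ {min = i} is nonzero and finite
  have hB0 : μ {ω | min (T₁ ω) (T₂ ω) = i} ≠ 0 := by
    intro h
    have hsub : {ω | T₂ ω < T₁ ω ∧ min (T₁ ω) (T₂ ω) = i} ⊆ {ω | min (T₁ ω) (T₂ ω) = i} :=
      fun ω hω => hω.2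
    exact heps.ne' (le_antisymm (h ▸ measure_mono hsub) zero_le)
  have hBt : μ {ω | min (T₁ ω) (T₂ ω) = i} ≠ ⊤ := measure_ne_top μ _
  -- the left-hand side event
  have hLHS : {ω | T₁ ω = i + d ∧ T₂ ω = i}
      = {ω | T₁ ω = i + d ∧ min (T₁ ω) (T₂ ω) = i ∧ T₂ ω < T₁ ω} := by
    ext ω
    simp only [Set.mem_setOf_eq]
    constructor
    · rintro ⟨h1, h2⟩
      have hlt' : T₂ ω < T₁ ω := by omega
      exact ⟨h1, by rw [min_eq_right hlt'.le, h2], hlt'⟩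
    · rintro ⟨h1, h2, h3⟩
      exact ⟨h1, by rw [← h2, min_eq_right h3.le]⟩
  rw [hLHS, hprod1, hprod2, hg1, hf1, div_one]
  have hfi : f i = μ {ω | i ≤ min (T₁ ω) (T₂ ω)} := rfl
  rw [← hfi]
  rw [mul_div_self_chain _ _ (hf0 i hi le_rfl) (hft i)]
  rw [mul_div_self_chain _ _ hB0 hBt]
  rw [mul_div_self_chain _ _ (hg0 1 le_rfl hd) (hgt 1)]
  rw [mul_div_self_chain _ _ (hg0 d hd le_rfl) (hgt d)]
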